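/- For all s ∈ (0, s̄), every component of the velocity vector γ'(s) of the equilibrium curve is strictly positive, i.e., γ_i'(s) > 0 for all i ∈ {0, 1, ..., n+1}. -/
import Mathlib


/-- For all `s ∈ (0, s̄)`, every component of the velocity vector
`γ'(s)` of the equilibrium curve is strictly positive. -/
theorem gamma_velocity_positive
    (n : ℕ) (hn : 2 ≤ n) (G lam lamc nu : ℝ)
    (hG : 0 < G) (hlam : 0 < lam) (hlamc : 0 < lamc) (hnu : 0 < nu)
    (sbar : ℝ) (hsbar : 0 < sbar)
    (γ γ' : ℕ → ℝ → ℝ)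
    (hγn : ∀ s ∈ Set.Ioo 0 sbar, γ n s = s)
    (hγmid : ∀ i, 1 ≤ i → i ≤ n - 1 → ∀ s ∈ Set.Ioo 0 sbar,
      γ i s = s / (1 - γ (i + 1) s))
    (hγ0 : ∀ s ∈ Set.Ioo 0 sbar, γ 0 s = lamc * s / (lam * (1 - γ 1 s)))
    (hγlast : ∀ s ∈ Set.Ioo 0 sbar, γ (n + 1) s = (G * lamc / nu) * s)
    (hbound : ∀ i, 1 ≤ i → i ≤ n → ∀ s ∈ Set.Ioo 0 sbar, γ i s ∈ Set.Ioo (0 : ℝ) 1)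
    (hderiv : ∀ i, i ≤ n + 1 → ∀ s ∈ Set.Ioo 0 sbar, HasDerivAt (γ i) (γ' i s) s) :
    ∀ s ∈ Set.Ioo 0 sbar, ∀ i, i ≤ n + 1 → 0 < γ' i s := by
  intro s hs
  have hso : Set.Ioo (0:ℝ) sbar ∈ nhds s := isOpen_Ioo.mem_nhds hs
  have hspos : 0 < s := hs.1
  -- case i = n + 1
  have hlast : 0 < γ' (n+1) s := by
    have heq : γ (n+1) =ᶠ[nhds s] fun t => (G * lamc / nu) * t := by
      filter_upwards [hso] with t ht using hγlast t ht
    have h1 : HasDerivAt (γ (n+1)) (G * lamc / nu * 1) s :=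
      ((hasDerivAt_id s).const_mul (G * lamc / nu)).congr_of_eventuallyEq heq
    have := (hderiv (n+1) le_rfl s hs).unique h1
    rw [this]
    positivity
  -- case i = n
  have hcn : 0 < γ' n s := by
    have heq : γ n =ᶠ[nhds s] id := by
      filter_upwards [hso] with t ht using hγn t ht
    have h1 : HasDerivAt (γ n) 1 s := (hasDerivAt_id s).congr_of_eventuallyEq heq
    have := (hderiv n (by omega) s hs).unique h1
    rw [this]; norm_num
  -- main downward induction
  have main : ∀ k (i : ℕ), i ≤ n + 1 → n + 1 - i ≤ k → 0 < γ' i s := by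
    intro k
    induction k with
    | zero =>
      intro i hi hk
      have : i = n + 1 := by omega
      rw [this]; exact hlast
    | succ k ih =>
      intro i hi hk
      rcases eq_or_lt_of_le hi with h | h
      · rw [h]; exact hlast
      rcases eq_or_ne i n with rfl | hin
      · exact hcn
      have hile : i ≤ n - 1 := by omega
      have hnext : 0 < γ' (i+1) s := ih (i+1) (by omega) (by omega)
      have hb : γ (i+1) s ∈ Set.Ioo (0:ℝ) 1 := hbound (i+1) (by omega) (by omega) s hs
      have hpos : 0 < 1 - γ (i+1) s := by linarith [hb.2]
      have hd : HasDerivAt (fun t => 1 - γ (i+1) t) (0 - γ' (i+1) s) s :=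
        (hasDerivAt_const s (1:ℝ)).sub (hderiv (i+1) (by omega) s hs)
      rcases Nat.eq_zero_or_pos i with rfl | hi1
      · -- i = 0, note i+1 = 1
        have hd' : HasDerivAt (fun t => lam * (1 - γ 1 t)) (lam * (0 - γ' 1 s)) s :=
          hd.const_mul lam
        have hne : lam * (1 - γ 1 s) ≠ 0 := by positivity
        have hnum : HasDerivAt (fun t => lamc * t) (lamc * 1) s :=
          (hasDerivAt_id s).const_mul lamc
        have hq : HasDerivAt (fun t => lamc * t / (lam * (1 - γ 1 t)))
            ((lamc * 1 * (lam * (1 - γ 1 s)) - lamc * s * (lam * (0 - γ' 1 s))) /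
              (lam * (1 - γ 1 s)) ^ 2) s := hnum.div hd' hne
        have heq : γ 0 =ᶠ[nhds s] fun t => lamc * t / (lam * (1 - γ 1 t)) := by
          filter_upwards [hso] with t ht using hγ0 t ht
        have := (hderiv 0 (by omega) s hs).unique (hq.congr_of_eventuallyEq heq)
        simp only [zero_add] at hnext hpos
        rw [this]
        apply div_pos
        · nlinarith [mul_pos hlamc (mul_pos hlam hpos),
            mul_pos (mul_pos hlamc hspos) (mul_pos hlam hnext)]
        · positivity
      · -- 1 ≤ i ≤ n-1
        have hq : HasDerivAt (fun t => t / (1 - γ (i+1) t))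
            ((1 * (1 - γ (i+1) s) - s * (0 - γ' (i+1) s)) / (1 - γ (i+1) s) ^ 2) s :=
          (hasDerivAt_id s).div hd (ne_of_gt hpos)
        have heq : γ i =ᶠ[nhds s] fun t => t / (1 - γ (i+1) t) := by
          filter_upwards [hso] with t ht using hγmid i hi1 hile t ht
        have := (hderiv i (by omega) s hs).unique (hq.congr_of_eventuallyEq heq)
        rw [this]
        apply div_pos
        · nlinarith [mul_pos hspos hnext, hpos]
        · positivity
  intro i hi
  exact main (n + 1) i hi (by omega)
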